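/- For p ≥ 1 and −1 ≤ α, β ≤ 1, the minimum of tr(C_{z,p} Π) over all positive semidefinite Π ∈ M₄(ℂ) with trace 1, partial trace over the second factor equal to (1/2)[[1,β],[β,1]] and partial trace over the first factor equal to (1/2)[[1,α],[α,1]], equals 2^{p−1}(1 − √(1 − max(α²,β²))), where C_{z,p} = diag(0, 2^p, 2^p, 0). -/

import Mathlib

open Matrix
open scoped ComplexOrder

noncomputable section

/-- Partial trace over the second tensor factor of `M₄(ℂ) ≅ M₂(ℂ) ⊗ M₂(ℂ)`
(index ordering `(i,k) ↦ 2*i + k`). -/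
def ptrace2 (A : Matrix (Fin 4) (Fin 4) ℂ) : Matrix (Fin 2) (Fin 2) ℂ :=
  !![A 0 0 + A 1 1, A 0 2 + A 1 3; A 2 0 + A 3 1, A 2 2 + A 3 3]

/-- Partial trace over the first tensor factor. -/
def ptrace1 (A : Matrix (Fin 4) (Fin 4) ℂ) : Matrix (Fin 2) (Fin 2) ℂ :=
  !![A 0 0 + A 2 2, A 0 1 + A 2 3; A 1 0 + A 3 2, A 1 1 + A 3 3]

/-- Kronecker product `M₂(ℂ) × M₂(ℂ) → M₄(ℂ)` with index ordering `(i,k) ↦ 2*i + k`. -/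
def kron (A B : Matrix (Fin 2) (Fin 2) ℂ) : Matrix (Fin 4) (Fin 4) ℂ :=
  !![A 0 0 * B 0 0, A 0 0 * B 0 1, A 0 1 * B 0 0, A 0 1 * B 0 1;
     A 0 0 * B 1 0, A 0 0 * B 1 1, A 0 1 * B 1 0, A 0 1 * B 1 1;
     A 1 0 * B 0 0, A 1 0 * B 0 1, A 1 1 * B 0 0, A 1 1 * B 0 1;
     A 1 0 * B 1 0, A 1 0 * B 1 1, A 1 1 * B 1 0, A 1 1 * B 1 1]

def σx : Matrix (Fin 2) (Fin 2) ℂ := !![0, 1; 1, 0]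
def σy : Matrix (Fin 2) (Fin 2) ℂ := !![0, -Complex.I; Complex.I, 0]
def σz : Matrix (Fin 2) (Fin 2) ℂ := !![1, 0; 0, -1]

/-- The symmetric cost operator `C_{symm,p}`. -/
def Csymm (p : ℝ) : Matrix (Fin 4) (Fin 4) ℂ :=
  !![(((2:ℝ)^p : ℝ) : ℂ), 0, 0, -(((2:ℝ)^p : ℝ) : ℂ);
     0, (((2:ℝ)^(p+1) : ℝ) : ℂ), 0, 0;
     0, 0, (((2:ℝ)^(p+1) : ℝ) : ℂ), 0;
     -(((2:ℝ)^p : ℝ) : ℂ), 0, 0, (((2:ℝ)^p : ℝ) : ℂ)]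

/-- The single-observable cost operator `C_{z,p} = diag(0, 2^p, 2^p, 0)`. -/
def Cz (p : ℝ) : Matrix (Fin 4) (Fin 4) ℂ :=
  !![0, 0, 0, 0;
     0, (((2:ℝ)^p : ℝ) : ℂ), 0, 0;
     0, 0, (((2:ℝ)^p : ℝ) : ℂ), 0;
     0, 0, 0, 0]

namespace Stmt10Aux

lemma diag_re_nonneg {P : Matrix (Fin 4) (Fin 4) ℂ} (hP : P.PosSemidef) (k : Fin 4) :
    0 ≤ (P k k).re := by
  have h := hP.re_dotProduct_nonneg (Pi.single k 1)
  simpa [Matrix.mulVec_single, Pi.single_star, dotProduct,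
    Pi.single_apply, Finset.sum_ite_eq'] using h

lemma entry_sq_le {P : Matrix (Fin 4) (Fin 4) ℂ} (hP : P.PosSemidef) (i j : Fin 4) :
    Complex.normSq (P i j) ≤ (P i i).re * (P j j).re := by
  set A := (P i i).re with hAdef
  set D := (P j j).re with hDdef
  set z := P i j with hzdef
  set u := Complex.normSq z with hudef
  have hA : 0 ≤ A := diag_re_nonneg hP i
  have hD : 0 ≤ D := diag_re_nonneg hP j
  have hu : 0 ≤ u := Complex.normSq_nonneg z
  have hii : P i i = (A : ℂ) := (hP.isHermitian.coe_re_apply_self i).symm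
  have hjj : P j j = (D : ℂ) := (hP.isHermitian.coe_re_apply_self j).symm
  have hji : P j i = (starRingEnd ℂ) z := by
    have h5 : star (P j i) = P i j := hP.isHermitian.apply i j
    rw [← star_star (P j i), h5]; rfl
  have hcz : (starRingEnd ℂ) z * z = (u:ℂ) := Complex.normSq_eq_conj_mul_self.symm
  have key : ∀ t : ℝ, 0 ≤ A * u * t^2 - 2 * u * t + D := by
    intro t
    have h := hP.re_dotProduct_nonneg (Pi.single i ((t:ℂ) * z) + Pi.single j (-1))
    have e : star (Pi.single i ((t:ℂ) * z) + Pi.single j (-1)) ⬝ᵥ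
        (P *ᵥ (Pi.single i ((t:ℂ) * z) + Pi.single j (-1)))
        = ((A * u * t^2 - 2*u*t + D : ℝ) : ℂ) := by
      simp [Matrix.mulVec_add, Matrix.mulVec_single, star_add, ← Pi.single_star,
        add_dotProduct, single_dotProduct, Pi.add_apply, Pi.single_apply,
        hii, hjj, hji, star_mul', mul_add, add_mul]
      linear_combination ((t:ℂ)^2 * (A:ℂ) - 2*(t:ℂ)) * hcz
    rw [e] at h
    simpa only [RCLike.re_to_complex, Complex.ofReal_re] using h
  rcases hA.eq_or_lt with hA0 | hA0
  · by_contra hcon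
    push_neg at hcon
    have hupos : 0 < u := lt_of_le_of_lt (by nlinarith) hcon
    have h1 := key ((D+1)/(2*u))
    rw [← hA0] at h1
    have h2 : 2*u*((D+1)/(2*u)) = D + 1 := by field_simp
    nlinarith [h1, h2]
  · have h1 := key (1/A)
    have h2 : 0 ≤ A * (A*u*(1/A)^2 - 2*u*(1/A) + D) := mul_nonneg hA0.le h1
    have h3 : A * (1/A) = 1 := by field_simp
    have h4 : A * (A*u*(1/A)^2 - 2*u*(1/A) + D) = u*(A*(1/A))^2 - 2*u*(A*(1/A)) + A*D := by
      ring
    rw [h4, h3] at h2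
    nlinarith [h2]

lemma sq_bound (A s : ℝ) : ∀ u x₁ x₂ : ℝ, 0 ≤ x₁ → 0 ≤ x₂ → x₁^2 ≤ A*s → x₂^2 ≤ s*A →
    |u|/2 ≤ x₁ + x₂ → u^2 ≤ 16 * (A*s) := by
  intro u x₁ x₂ hx₁ hx₂ hm₁ hm₂ hu
  have cross : x₁*x₂ ≤ A*s := by nlinarith [sq_nonneg (x₁-x₂)]
  have hsum : (x₁+x₂)^2 ≤ 4*(A*s) := by nlinarith
  have h9 : (|u|/2)^2 ≤ (x₁+x₂)^2 := by nlinarith [abs_nonneg u]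
  nlinarith [sq_abs u]

def Bmat (p₁ p₂ r₁ r₂ : ℝ) : Matrix (Fin 2) (Fin 4) ℂ :=
  !![(p₁:ℂ), (r₁:ℂ), (r₁:ℂ), (p₁:ℂ); (p₂:ℂ), (r₂:ℂ), -(r₂:ℂ), -(p₂:ℂ)]

lemma mem_construct (p : ℝ) (α β q p₁ p₂ r₁ r₂ : ℝ)
    (h1 : p₁^2 + p₂^2 = (1+q)/4) (h2 : r₁^2 + r₂^2 = (1-q)/4)
    (h3 : p₁*r₁ + p₂*r₂ = α/4) (h4 : p₁*r₁ - p₂*r₂ = β/4) :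
    ∃ P : Matrix (Fin 4) (Fin 4) ℂ, P.PosSemidef ∧ P.trace = 1 ∧
        ptrace2 P = (1/2 : ℂ) • !![1, (β : ℂ); (β : ℂ), 1] ∧
        ptrace1 P = (1/2 : ℂ) • !![1, (α : ℂ); (α : ℂ), 1] ∧
        (Cz p * P).trace = (((2:ℝ)^p * (1 - q) / 2 : ℝ) : ℂ) := by
  have c1 : ((p₁:ℂ))^2 + (p₂:ℂ)^2 = (1+(q:ℂ))/4 := by exact_mod_cast h1
  have c2 : ((r₁:ℂ))^2 + (r₂:ℂ)^2 = (1-(q:ℂ))/4 := by exact_mod_cast h2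
  have c3 : ((p₁:ℂ))*r₁ + (p₂:ℂ)*r₂ = (α:ℂ)/4 := by exact_mod_cast h3
  have c4 : ((p₁:ℂ))*r₁ - (p₂:ℂ)*r₂ = (β:ℂ)/4 := by exact_mod_cast h4
  refine ⟨(Bmat p₁ p₂ r₁ r₂)ᴴ * Bmat p₁ p₂ r₁ r₂,
    Matrix.posSemidef_conjTranspose_mul_self _, ?_, ?_, ?_, ?_⟩
  · simp [Matrix.trace, Matrix.diag, Matrix.mul_apply, Fin.sum_univ_four, Fin.sum_univ_two,
      Bmat, Matrix.conjTranspose_apply, Complex.conj_ofReal]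
    linear_combination 2*c1 + 2*c2
  · ext i j
    fin_cases i <;> fin_cases j <;>
      simp [ptrace2, Bmat, Matrix.mul_apply, Fin.sum_univ_two,
        Matrix.conjTranspose_apply, Complex.conj_ofReal] <;>
      first
        | linear_combination c1 + c2
        | linear_combination 2*c4
  · ext i j
    fin_cases i <;> fin_cases j <;>
      simp [ptrace1, Bmat, Matrix.mul_apply, Fin.sum_univ_two,
        Matrix.conjTranspose_apply, Complex.conj_ofReal] <;>
      first
        | linear_combination c1 + c2
        | linear_combination 2*c3
  · simp [Matrix.trace, Matrix.diag, Matrix.mul_apply, Fin.sum_univ_four, Fin.sum_univ_two,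
      Cz, Bmat, Matrix.conjTranspose_apply, Complex.conj_ofReal, Matrix.vecHead, Matrix.vecTail]
    linear_combination (((2:ℝ)^p : ℝ):ℂ) * 2 * c2

lemma abs_add_abs_sub (x y : ℝ) : |x+y| + |x-y| = 2 * max |x| |y| := by
  rcases le_total 0 (x+y) with h | h <;> rcases le_total 0 (x-y) with h' | h'
  · have hx0 : 0 ≤ x := by linarith
    have : max |x| |y| = x := by
      rw [abs_of_nonneg hx0]; exact max_eq_left ((abs_le.mpr ⟨by linarith, by linarith⟩))
    rw [abs_of_nonneg h, abs_of_nonneg h', this]; ring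
  · have hy0 : 0 ≤ y := by linarith
    have : max |x| |y| = y := by
      rw [abs_of_nonneg hy0]; exact max_eq_right ((abs_le.mpr ⟨by linarith, by linarith⟩))
    rw [abs_of_nonneg h, abs_of_nonpos h', this]; ring
  · have hy0 : y ≤ 0 := by linarith
    have : max |x| |y| = -y := by
      rw [abs_of_nonpos hy0]; exact max_eq_right ((abs_le.mpr ⟨by linarith, by linarith⟩))
    rw [abs_of_nonpos h, abs_of_nonneg h', this]; ring
  · have hx0 : x ≤ 0 := by linarith
    have : max |x| |y| = -x := by
      rw [abs_of_nonpos hx0]; exact max_eq_left ((abs_le.mpr ⟨by linarith, by linarith⟩))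
    rw [abs_of_nonpos h, abs_of_nonpos h', this]; ring

lemma exists_params (α β : ℝ) (hα₁ : -1 ≤ α) (hα₂ : α ≤ 1) (hβ₁ : -1 ≤ β) (hβ₂ : β ≤ 1) :
    ∃ p₁ p₂ r₁ r₂ : ℝ,
      p₁^2 + p₂^2 = (1 + Real.sqrt (1 - max (α^2) (β^2)))/4 ∧
      r₁^2 + r₂^2 = (1 - Real.sqrt (1 - max (α^2) (β^2)))/4 ∧
      p₁*r₁ + p₂*r₂ = α/4 ∧ p₁*r₁ - p₂*r₂ = β/4 := by
  set q := Real.sqrt (1 - max (α^2) (β^2)) with hq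
  set M := max |α| |β| with hM
  have hM0 : 0 ≤ M := le_trans (abs_nonneg α) (le_max_left _ _)
  have hM2 : M^2 = max (α^2) (β^2) := by
    rcases le_total |α| |β| with h | h
    · have h2 : α^2 ≤ β^2 := by
        nlinarith [mul_self_le_mul_self (abs_nonneg α) h, sq_abs α, sq_abs β]
      rw [hM, max_eq_right h, max_eq_right h2, sq_abs]
    · have h2 : β^2 ≤ α^2 := by
        nlinarith [mul_self_le_mul_self (abs_nonneg β) h, sq_abs α, sq_abs β]
      rw [hM, max_eq_left h, max_eq_left h2, sq_abs]
  have hmax1 : max (α^2) (β^2) ≤ 1 := max_le (by nlinarith) (by nlinarith)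
  have hmax0 : 0 ≤ max (α^2) (β^2) := le_max_of_le_left (sq_nonneg α)
  have hq0 : 0 ≤ q := Real.sqrt_nonneg _
  have hq2 : q^2 = 1 - max (α^2) (β^2) := Real.sq_sqrt (by linarith)
  by_cases hM00 : M = 0
  · have ha : α = 0 := by
      have h1 : |α| ≤ M := le_max_left _ _
      rw [hM00] at h1
      exact abs_eq_zero.mp (le_antisymm h1 (abs_nonneg α))
    have hb : β = 0 := by
      have h1 : |β| ≤ M := le_max_right _ _
      rw [hM00] at h1
      exact abs_eq_zero.mp (le_antisymm h1 (abs_nonneg β))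
    have hmax00 : max (α^2) (β^2) = 0 := by rw [ha, hb]; norm_num
    have hq1 : q = 1 := by rw [hq, hmax00]; simp
    refine ⟨Real.sqrt (1/2), 0, 0, 0, ?_, ?_, ?_, ?_⟩
    · rw [Real.sq_sqrt (by norm_num : (0:ℝ) ≤ 1/2), hq1]; norm_num
    · rw [hq1]; norm_num
    · rw [ha]; norm_num
    · rw [hb]; norm_num
  · have hMpos : 0 < M := lt_of_le_of_ne hM0 (Ne.symm hM00)
    have h1q : 0 < 1 + q := by linarith
    have habs : |α+β| + |α-β| = 2*M := by rw [hM]; exact abs_add_abs_sub α β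
    have hb1 : (0:ℝ) ≤ (1+q)*|α+β|/(8*M) := by positivity
    have hb2 : (0:ℝ) ≤ (1+q)*|α-β|/(8*M) := by positivity
    have hc1 : (0:ℝ) ≤ M*|α+β|/(8*(1+q)) := by positivity
    have hc2 : (0:ℝ) ≤ M*|α-β|/(8*(1+q)) := by positivity
    have sgn_abs : ∀ x : ℝ, Real.sign x * |x| = x := by
      intro x
      rcases lt_trichotomy x 0 with h | rfl | h
      · rw [Real.sign_of_neg h, abs_of_neg h]; ring
      · simp [Real.sign_zero]
      · rw [Real.sign_of_pos h, abs_of_pos h]; ring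
    have hsign_sq : ∀ x : ℝ, (Real.sign x)^2 * (M*|x|/(8*(1+q))) = M*|x|/(8*(1+q)) := by
      intro x
      rcases eq_or_ne x 0 with rfl | hx
      · simp
      · rcases hx.lt_or_gt with h | h
        · rw [Real.sign_of_neg h]; ring
        · rw [Real.sign_of_pos h]; ring
    have hprod : ∀ x : ℝ, Real.sqrt ((1+q)*|x|/(8*M)) * (Real.sign x * Real.sqrt (M*|x|/(8*(1+q))))
        = x/8 := by
      intro x
      have hx1 : (0:ℝ) ≤ (1+q)*|x|/(8*M) := by positivity
      have e : Real.sqrt ((1+q)*|x|/(8*M)) * Real.sqrt (M*|x|/(8*(1+q))) = |x|/8 := by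
        rw [← Real.sqrt_mul hx1,
          show (1+q)*|x|/(8*M) * (M*|x|/(8*(1+q))) = (|x|/8)^2 by
            field_simp,
          Real.sqrt_sq (by positivity)]
      calc Real.sqrt ((1+q)*|x|/(8*M)) * (Real.sign x * Real.sqrt (M*|x|/(8*(1+q))))
          = Real.sign x * (Real.sqrt ((1+q)*|x|/(8*M)) * Real.sqrt (M*|x|/(8*(1+q)))) := by ring
        _ = (Real.sign x * |x|)/8 := by rw [e]; ring
        _ = x/8 := by rw [sgn_abs]
    refine ⟨Real.sqrt ((1+q)*|α+β|/(8*M)), Real.sqrt ((1+q)*|α-β|/(8*M)),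
      Real.sign (α+β) * Real.sqrt (M*|α+β|/(8*(1+q))),
      Real.sign (α-β) * Real.sqrt (M*|α-β|/(8*(1+q))), ?_, ?_, ?_, ?_⟩
    · rw [Real.sq_sqrt hb1, Real.sq_sqrt hb2]
      rw [← add_div, ← mul_add, habs]
      field_simp
      ring
    · rw [mul_pow, mul_pow, Real.sq_sqrt hc1, Real.sq_sqrt hc2, hsign_sq, hsign_sq]
      rw [← add_div, ← mul_add, habs]
      have hM2q : 2*M^2 = 2 - 2*q^2 := by rw [hM2]; linarith [hq2]
      rw [show M*(2*M) = 2*M^2 by ring, hM2q]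
      field_simp
      ring
    · rw [hprod, hprod]; ring
    · rw [hprod, hprod]; ring

end Stmt10Aux

/-- the optimal transport cost for `C_{z,p}` between the states
`ρ(α) = (1/2)(I + ασ_x)` and `ρ(β)` equals `2^{p−1}(1 − √(1 − max(α²,β²)))`. -/
theorem stmt_10 (p : ℝ) (hp : 1 ≤ p) (α β : ℝ) (hα₁ : -1 ≤ α) (hα₂ : α ≤ 1)
    (hβ₁ : -1 ≤ β) (hβ₂ : β ≤ 1) :
    IsLeast {x : ℝ | ∃ P : Matrix (Fin 4) (Fin 4) ℂ, P.PosSemidef ∧ P.trace = 1 ∧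
        ptrace2 P = (1/2 : ℂ) • !![1, (β : ℂ); (β : ℂ), 1] ∧
        ptrace1 P = (1/2 : ℂ) • !![1, (α : ℂ); (α : ℂ), 1] ∧
        (Cz p * P).trace = (x : ℂ)}
      ((2:ℝ)^(p-1) * (1 - Real.sqrt (1 - max (α^2) (β^2)))) := by
  have hmax1 : max (α^2) (β^2) ≤ 1 := max_le (by nlinarith) (by nlinarith)
  have hmax0 : 0 ≤ max (α^2) (β^2) := le_max_of_le_left (sq_nonneg α)
  set q := Real.sqrt (1 - max (α^2) (β^2)) with hq
  have hq0 : 0 ≤ q := Real.sqrt_nonneg _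
  have hq2 : q^2 = 1 - max (α^2) (β^2) := Real.sq_sqrt (by linarith)
  have h2p : (0:ℝ) < (2:ℝ)^p := Real.rpow_pos_of_pos (by norm_num) p
  have hpow : (2:ℝ)^(p-1) = (2:ℝ)^p / 2 := by
    rw [Real.rpow_sub (by norm_num : (0:ℝ) < 2), Real.rpow_one]
  constructor
  · obtain ⟨p₁, p₂, r₁, r₂, h1, h2, h3, h4⟩ :=
      Stmt10Aux.exists_params α β hα₁ hα₂ hβ₁ hβ₂
    obtain ⟨P, hPSD, htr, hpt2, hpt1, hcost⟩ :=
      Stmt10Aux.mem_construct p α β q p₁ p₂ r₁ r₂ h1 h2 h3 h4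
    refine ⟨P, hPSD, htr, hpt2, hpt1, ?_⟩
    rw [hcost]
    norm_cast
    rw [hpow]; ring
  · rintro x ⟨P, hPSD, htr, hpt2, hpt1, hcost⟩
    have e00 := congrFun (congrFun hpt2 0) 0
    have eb := congrFun (congrFun hpt2 0) 1
    have f00 := congrFun (congrFun hpt1 0) 0
    have f11 := congrFun (congrFun hpt1 1) 1
    have ea := congrFun (congrFun hpt1 0) 1
    simp [ptrace2, ptrace1] at e00 eb f00 f11 ea
    set A := (P 0 0).re with hA
    set s := (P 1 1).re with hs
    have rAs : A + s = 1/2 := by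
      have := congrArg Complex.re e00
      simpa using this
    have r22 : (P 2 2).re = s := by
      have := congrArg Complex.re f00
      simp at this
      linarith
    have r33 : (P 3 3).re = A := by
      have := congrArg Complex.re f11
      simp at this
      linarith
    have m01 : (‖P 0 1‖)^2 ≤ A * s := by
      rw [Complex.sq_norm]; exact Stmt10Aux.entry_sq_le hPSD 0 1
    have m23 : (‖P 2 3‖)^2 ≤ s * A := by
      rw [Complex.sq_norm]
      have := Stmt10Aux.entry_sq_le hPSD 2 3
      rwa [r22, r33] at this
    have m02 : (‖P 0 2‖)^2 ≤ A * s := by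
      rw [Complex.sq_norm]
      have := Stmt10Aux.entry_sq_le hPSD 0 2
      rwa [r22] at this
    have m13 : (‖P 1 3‖)^2 ≤ s * A := by
      rw [Complex.sq_norm]
      have := Stmt10Aux.entry_sq_le hPSD 1 3
      rwa [r33] at this
    have habsα : |α|/2 ≤ ‖P 0 1‖ + ‖P 2 3‖ := by
      have h5 : ‖P 0 1 + P 2 3‖ ≤ ‖P 0 1‖ + ‖P 2 3‖ :=
        norm_add_le _ _
      rw [ea] at h5
      rw [show ((2:ℂ)⁻¹ * ↑α : ℂ) = ((α/2 : ℝ) : ℂ) by push_cast; ring] at h5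
      rw [Complex.norm_real, Real.norm_eq_abs, abs_div] at h5
      simpa [abs_of_nonneg] using h5
    have habsβ : |β|/2 ≤ ‖P 0 2‖ + ‖P 1 3‖ := by
      have h5 : ‖P 0 2 + P 1 3‖ ≤ ‖P 0 2‖ + ‖P 1 3‖ :=
        norm_add_le _ _
      rw [eb] at h5
      rw [show ((2:ℂ)⁻¹ * ↑β : ℂ) = ((β/2 : ℝ) : ℂ) by push_cast; ring] at h5
      rw [Complex.norm_real, Real.norm_eq_abs, abs_div] at h5
      simpa [abs_of_nonneg] using h5
    clear_value A s q
    have sqb := Stmt10Aux.sq_bound A s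
    have hαb : α^2 ≤ 16 * (A*s) :=
      sqb α _ _ (norm_nonneg (P 0 1)) (norm_nonneg (P 2 3)) m01 m23 habsα
    have hβb : β^2 ≤ 16 * (A*s) :=
      sqb β _ _ (norm_nonneg (P 0 2)) (norm_nonneg (P 1 3)) m02 m13 habsβ
    have hmaxb : max (α^2) (β^2) ≤ 16*(A*s) := max_le hαb hβb
    have hA' : A = 1/2 - s := by linarith
    have h16 : 16*(A*s) = 8*s - 16*s^2 := by rw [hA']; ring
    have h4s : (1-4*s)^2 ≤ 1 - max (α^2) (β^2) := by nlinarith [hmaxb, h16]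
    have hs4 : 1 - q ≤ 4*s := by
      have h6 : Real.sqrt ((1-4*s)^2) ≤ q := by rw [hq]; exact Real.sqrt_le_sqrt h4s
      rw [Real.sqrt_sq_eq_abs] at h6
      have := le_abs_self (1-4*s)
      linarith
    have hc2 : (Cz p * P).trace = (((2:ℝ)^p :ℝ):ℂ) * (P 1 1 + P 2 2) := by
      simp [Matrix.trace, Matrix.diag, Matrix.mul_apply, Fin.sum_univ_four, Cz,
        Matrix.vecHead, Matrix.vecTail]
      ring
    have hxre : x = (2:ℝ)^p * (s + s) := by
      have h7 := congrArg Complex.re (hcost.symm.trans hc2)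
      simpa [Complex.ofReal_re, r22, ← hs] using h7
    rw [hpow, hxre, div_mul_eq_mul_div, div_le_iff₀ (by norm_num : (0:ℝ) < 2)]
    exact le_trans (mul_le_mul_of_nonneg_left hs4 h2p.le) (le_of_eq (by ring))
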